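/- For any unit-norm vector w ∈ ℂ^M, the beampattern g(θ) = |w^H α(θ)|² with steering vector α(θ) = (1, e^{-i2πD sinθ}, ..., e^{-i2πD sinθ (M-1)}) satisfies ∫_{sin Θmin}^{sin Θmax} g(arcsin x) dx ≤ 1/D, for any -1 ≤ sin Θmin < sin Θmax ≤ 1 with 2πD ≤ π/ max(|sin Θmin|,|sin Θmax|) ensuring the frequency variable Ω = 2πD x stays in [-π, π]. -/

import Mathlib

open Complex Real MeasureTheory

set_option maxHeartbeats 1000000 in
/-- For any unit-norm beamformer `w ∈ ℂ^M`, the integral of the beampattern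
`g(arcsin x) = |∑_m conj (w m) e^{-i 2πD x m}|²` over the spatial frequency interval
`[sin Θmin, sin Θmax]` is at most `1/D`, provided the frequency variable
`Ω = 2πD x` stays within `[-π, π]`. -/
theorem beampattern_integral_le (M : ℕ) (D s₁ s₂ : ℝ) (hD : 0 < D)
    (h₁ : -1 ≤ s₁) (h₁₂ : s₁ < s₂) (h₂ : s₂ ≤ 1)
    (hfreq : 2 * π * D * max |s₁| |s₂| ≤ π)
    (w : Fin M → ℂ) (hw : ∑ m, ‖w m‖ ^ 2 = 1) :
    (∫ x in s₁..s₂,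
        ‖∑ m : Fin M, (starRingEnd ℂ) (w m) *
          Complex.exp (-Complex.I * (2 * π * D * x) * m)‖ ^ 2) ≤ 1 / D := by
  have hπ : (0:ℝ) < π := Real.pi_pos
  set c : ℝ := 1 / (2*D) with hc
  have hc0 : 0 < c := by positivity
  have hmax : max |s₁| |s₂| ≤ c := by
    rw [hc, le_div_iff₀ (by positivity)]
    nlinarith [hfreq]
  have hs1 : -c ≤ s₁ := neg_le_of_abs_le ((le_max_left _ _).trans hmax)
  have hs2 : s₂ ≤ c := le_of_abs_le ((le_max_right _ _).trans hmax)
  set F : ℝ → ℂ := fun x => ∑ m : Fin M, (starRingEnd ℂ) (w m) *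
      Complex.exp (-Complex.I * (2 * π * D * x) * m) with hF
  have hFc : Continuous F := by
    rw [hF]
    apply continuous_finset_sum
    intro m _
    exact continuous_const.mul (Complex.continuous_exp.comp (((continuous_const.mul (continuous_const.mul Complex.continuous_ofReal)).mul continuous_const)))
  -- pointwise expansion
  have hFF : ∀ x : ℝ, F x * (starRingEnd ℂ) (F x)
      = ∑ m : Fin M, ∑ n : Fin M,
          ((starRingEnd ℂ) (w m) * w n) *
            Complex.exp ((Complex.I * (2*(π:ℂ)*(D:ℂ)) * ((n:ℂ) - (m:ℂ))) * (x:ℂ)) := by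
    intro x
    rw [hF, map_sum, Finset.sum_mul_sum]
    refine Finset.sum_congr rfl fun m _ => Finset.sum_congr rfl fun n _ => ?_
    rw [map_mul, Complex.conj_conj, ← Complex.exp_conj, mul_mul_mul_comm, ← Complex.exp_add]
    congr 2
    simp only [map_mul, map_neg, Complex.conj_I, Complex.conj_ofReal, map_ofNat, map_natCast]
    ring
  -- integral of each term
  have hterm : ∀ m n : Fin M,
      (∫ x in (-c)..c, ((starRingEnd ℂ) (w m) * w n) *
          Complex.exp ((Complex.I * (2*(π:ℂ)*(D:ℂ)) * ((n:ℂ) - (m:ℂ))) * (x:ℂ)))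
        = if m = n then ((starRingEnd ℂ) (w m) * w n) * (2*(c:ℂ)) else 0 := by
    intro m n
    by_cases h : m = n
    · subst h
      simp only [sub_self, mul_zero, zero_mul, Complex.exp_zero, mul_one, if_pos]
      rw [intervalIntegral.integral_const]
      rw [sub_neg_eq_add, Complex.real_smul]
      push_cast
      ring
    · rw [if_neg h]
      have hmn : ((n:ℂ) - (m:ℂ)) ≠ 0 := by
        rw [sub_ne_zero]
        intro hEq
        apply h
        have : (n:ℕ) = (m:ℕ) := by exact_mod_cast hEq
        exact (Fin.val_injective this).symm
      have hD' : (D:ℂ) ≠ 0 := by exact_mod_cast hD.ne'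
      have h2 : (2 * (π:ℂ) * (D:ℂ)) ≠ 0 :=
        mul_ne_zero (mul_ne_zero two_ne_zero (by exact_mod_cast Real.pi_ne_zero)) hD'
      have hcc : (Complex.I * (2*(π:ℂ)*(D:ℂ)) * ((n:ℂ) - (m:ℂ))) ≠ 0 :=
        mul_ne_zero (mul_ne_zero Complex.I_ne_zero h2) hmn
      rw [intervalIntegral.integral_const_mul, integral_exp_mul_complex hcc]
      set k : ℤ := (n : ℤ) - (m : ℤ) with hk
      have hkc : ((k:ℂ)) = (n:ℂ) - (m:ℂ) := by rw [hk]; push_cast; ring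
      have e1 : (Complex.I * (2*(π:ℂ)*(D:ℂ)) * ((n:ℂ) - (m:ℂ))) * ((c:ℝ):ℂ)
          = (k:ℂ) * ((π:ℂ) * Complex.I) := by
        rw [← hkc, hc]
        push_cast
        field_simp
      have e2 : (Complex.I * (2*(π:ℂ)*(D:ℂ)) * ((n:ℂ) - (m:ℂ))) * (((-c):ℝ):ℂ)
          = ((-k:ℤ):ℂ) * ((π:ℂ) * Complex.I) := by
        push_cast
        push_cast at e1
        rw [mul_neg, e1]
        ring
      rw [e1, e2]
      rw [Complex.exp_int_mul, Complex.exp_int_mul, Complex.exp_pi_mul_I]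
      rw [zpow_neg, ← inv_zpow]
      norm_num
  -- re commutes with interval integral here
  have hInt2 : IntervalIntegrable (fun x => F x * (starRingEnd ℂ) (F x)) volume (-c) c :=
    ((hFc.mul (RCLike.continuous_conj.comp hFc)).intervalIntegrable _ _)
  have hreint : ∫ x in (-c)..c, ((F x) * (starRingEnd ℂ) (F x)).re
      = (∫ x in (-c)..c, F x * (starRingEnd ℂ) (F x)).re := by
    rw [intervalIntegral.integral_of_le (by linarith), intervalIntegral.integral_of_le (by linarith)]
    have := integral_re (μ := volume.restrict (Set.Ioc (-c) c))
      (f := fun x => F x * (starRingEnd ℂ) (F x)) hInt2.1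
    simpa [RCLike.re_eq_complex_re] using this
  -- the full-interval integral equals 1/D
  have hkey : ∫ x in (-c)..c, ‖F x‖^2 = 1/D := by
    have h1 : ∀ x : ℝ, ‖F x‖^2 = ((F x) * (starRingEnd ℂ) (F x)).re := by
      intro x
      rw [Complex.mul_conj]
      rw [Complex.ofReal_re, Complex.normSq_eq_norm_sq]
    simp_rw [h1]
    rw [hreint]
    have hIntTerm : ∀ m ∈ Finset.univ, IntervalIntegrable
        (fun x : ℝ => ∑ n : Fin M, ((starRingEnd ℂ) (w m) * w n) *
          Complex.exp ((Complex.I * (2*(π:ℂ)*(D:ℂ)) * ((n:ℂ) - (m:ℂ))) * (x:ℂ)))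
        volume (-c) c := by
      intro m _
      apply Continuous.intervalIntegrable
      apply continuous_finset_sum
      intro n _
      exact continuous_const.mul (Complex.continuous_exp.comp (continuous_const.mul Complex.continuous_ofReal))
    have hIntTerm2 : ∀ (m : Fin M), ∀ n ∈ Finset.univ, IntervalIntegrable
        (fun x : ℝ => ((starRingEnd ℂ) (w m) * w n) *
          Complex.exp ((Complex.I * (2*(π:ℂ)*(D:ℂ)) * ((n:ℂ) - (m:ℂ))) * (x:ℂ)))
        volume (-c) c := by
      intro m n _
      exact (continuous_const.mul (Complex.continuous_exp.comp (continuous_const.mul Complex.continuous_ofReal))).intervalIntegrable _ _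
    simp_rw [hFF]
    rw [intervalIntegral.integral_finset_sum hIntTerm]
    have : ∀ m : Fin M, (∫ x in (-c)..c, ∑ n : Fin M, ((starRingEnd ℂ) (w m) * w n) *
        Complex.exp ((Complex.I * (2*(π:ℂ)*(D:ℂ)) * ((n:ℂ) - (m:ℂ))) * (x:ℂ)))
        = ((starRingEnd ℂ) (w m) * w m) * (2*(c:ℂ)) := by
      intro m
      rw [intervalIntegral.integral_finset_sum (hIntTerm2 m)]
      simp_rw [hterm m]
      simp
    simp_rw [this]
    have hconj : ∀ m : Fin M, (starRingEnd ℂ) (w m) * w m = ((‖w m‖^2 : ℝ) : ℂ) := by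
      intro m
      rw [mul_comm, Complex.mul_conj, Complex.normSq_eq_norm_sq]
    simp_rw [hconj]
    rw [← Finset.sum_mul, ← Complex.ofReal_sum]
    rw [hw]
    simp only [Complex.ofReal_one, one_mul]
    have : ((2:ℂ) * (c:ℂ)).re = 2 * c := by simp
    rw [this, hc]
    field_simp
  -- monotonicity step
  have hgInt : IntervalIntegrable (fun x => ‖F x‖^2) volume (-c) c :=
    ((hFc.norm.pow 2).intervalIntegrable _ _)
  calc (∫ x in s₁..s₂, ‖F x‖^2)
      ≤ ∫ x in (-c)..c, ‖F x‖^2 := by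
        exact intervalIntegral.integral_mono_interval hs1 h₁₂.le hs2
          (Filter.Eventually.of_forall fun x => sq_nonneg _) hgInt
    _ = 1/D := hkey
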